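/- There exist countably infinite sets X and Y and a hypothesis class H ⊆ Y^X with DS dimension equal to 1 such that for every learner A : (X×Y)* → Y^X with finite properness number prop_H(A) < ∞ and every sample size m ∈ ℕ, there exists an H-realizable distribution D on X×Y with E_{S~D^m}[L_D(A(S))] ≥ 1/2. In particular, any learner for H achieving expected error strictly below 1/2 (and a fortiori any PAC learner for H) must have prop_H(A) = ∞. -/
import Mathlib


open MeasureTheory ENNReal
open scoped Classical

/-- `H` DS-shatters the tuple of (distinct) points `xs`. -/
def DSShatters {X Y : Type*} (H : Set (X → Y)) {d : ℕ} (xs : Fin d → X) : Prop :=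
  Function.Injective xs ∧
    ∃ F : Finset (X → Y), ↑F ⊆ H ∧ F.Nonempty ∧
      ∀ h ∈ F, ∀ i : Fin d, ∃ g ∈ F,
        g (xs i) ≠ h (xs i) ∧ ∀ j : Fin d, j ≠ i → g (xs j) = h (xs j)

/-- A finite training sequence is `H`-realizable. -/
def RealizableSeq {X Y : Type*} (H : Set (X → Y)) (S : List (X × Y)) : Prop :=
  ∃ h ∈ H, ∀ p ∈ S, h p.1 = p.2

/-- A distribution `D` on `X × Y` is `H`-realizable. -/
def RealizableDist {X Y : Type*} [MeasurableSpace X] [MeasurableSpace Y]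
    (H : Set (X → Y)) (D : Measure (X × Y)) : Prop :=
  ∀ m : ℕ, (Measure.pi fun _ : Fin m => D)
    {S : Fin m → X × Y | ∃ h ∈ H, ∀ i, h (S i).1 = (S i).2} = 1

/-- `prop_H(f) ≤ p`: some finite `H' ⊆ H` of cardinality at most `p` covers every value of
`f` pointwise. -/
def PropLe {X Y : Type*} (H : Set (X → Y)) (f : X → Y) (p : ℕ) : Prop :=
  ∃ H' : Finset (X → Y), ↑H' ⊆ H ∧ H'.card ≤ p ∧ ∀ x : X, ∃ h ∈ H', f x = h x

noncomputable section
namespace NFPL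

def hyp (T : Finset ℕ) : ℕ → ℕ := fun x => if x ∈ T then 0 else Encodable.encode T + 1
def IsGraph (T : Finset ℕ) : Prop :=
  ∀ x ∈ T, ∀ y ∈ T, (Nat.unpair x).1 = (Nat.unpair y).1 → x = y
def Hcls : Set (ℕ → ℕ) := {h | ∃ T : Finset ℕ, IsGraph T ∧ h = hyp T}
lemma hyp_eq_zero_iff {T : Finset ℕ} {x : ℕ} : hyp T x = 0 ↔ x ∈ T := by
  unfold hyp; split <;> simp_all


lemma T_eq_of {T T' : Finset ℕ} {x : ℕ} (h : hyp T x = hyp T' x) (h0 : hyp T x ≠ 0) :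
    T = T' := by
  have hx : x ∉ T := fun hx => h0 (hyp_eq_zero_iff.2 hx)
  have h0' : hyp T' x ≠ 0 := h ▸ h0
  have hx' : x ∉ T' := fun hx' => h0' (hyp_eq_zero_iff.2 hx')
  have he : Encodable.encode T + 1 = Encodable.encode T' + 1 := by
    simpa [hyp, hx, hx'] using h
  exact Encodable.encode_injective (Nat.succ_injective he)

lemma shatter_one : ∃ xs : Fin 1 → ℕ, DSShatters Hcls xs := by
  refine ⟨fun _ => 0, fun a b _ => Subsingleton.elim a b,
    {hyp {0}, hyp ∅}, ?_, ?_, ?_⟩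
  · intro h hh
    simp only [Finset.coe_insert, Finset.coe_singleton, Set.mem_insert_iff,
      Set.mem_singleton_iff] at hh
    rcases hh with rfl | rfl
    · exact ⟨{0}, by intro x hx y hy _; simp_all, rfl⟩
    · exact ⟨∅, by intro x hx; simp_all, rfl⟩
  · exact ⟨hyp {0}, Finset.mem_insert_self _ _⟩
  · intro h hh i
    have hne : hyp ({0} : Finset ℕ) 0 ≠ hyp (∅ : Finset ℕ) 0 := by simp [hyp]
    have hvac : ∀ (g : ℕ → ℕ), ∀ j : Fin 1, j ≠ i → g ((fun _ => 0) j) = h ((fun _ => 0) j) :=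
      fun g j hj => absurd (Subsingleton.elim j i) hj
    rcases Finset.mem_insert.mp hh with rfl | hh'
    · exact ⟨hyp ∅, Finset.mem_insert_of_mem (Finset.mem_singleton_self _), hne.symm, hvac _⟩
    · rw [Finset.mem_singleton] at hh'
      subst hh'
      exact ⟨hyp {0}, Finset.mem_insert_self _ _, hne, hvac _⟩

lemma not_shatter_two (xs : Fin 2 → ℕ) : ¬ DSShatters Hcls xs := by
  rintro ⟨-, F, hF, ⟨h0, h0F⟩, hflip⟩
  have key : ∀ h ∈ F, h (xs 0) = 0 := by
    intro h hh
    by_contra hz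
    obtain ⟨g, hgF, hgne, hgeq⟩ := hflip h hh 1
    have heq0 : g (xs 0) = h (xs 0) := hgeq 0 (by decide)
    obtain ⟨T, -, rfl⟩ := hF hh
    obtain ⟨T', -, rfl⟩ := hF hgF
    have hT : T' = T := T_eq_of heq0 (heq0 ▸ hz)
    exact hgne (by rw [hT])
  obtain ⟨g, hgF, hgne, -⟩ := hflip h0 h0F 0
  exact hgne (by rw [key h0 h0F, key g hgF])

lemma measurableSet_all {α : Type*} [MeasurableSpace α] [Countable α]
    [MeasurableSingletonClass α] (s : Set α) : MeasurableSet s :=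
  s.to_countable.measurableSet

variable {k n : ℕ}

def apt (b : Fin k → Fin n) (i : Fin k) : ℕ × ℕ := (Nat.pair i (b i), 0)

lemma apt_injective (b : Fin k → Fin n) : Function.Injective (apt b) := by
  intro i j h
  have h2 := congrArg (fun q : ℕ × ℕ => (Nat.unpair q.1).1) h
  simp only [apt, Nat.unpair_pair] at h2
  exact Fin.ext h2

def Tb (b : Fin k → Fin n) : Finset ℕ :=
  Finset.image (fun i : Fin k => Nat.pair i (b i)) Finset.univ

lemma graph_Tb (b : Fin k → Fin n) : IsGraph (Tb b) := by
  intro x hx y hy hxy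
  simp only [Tb, Finset.mem_image, Finset.mem_univ, true_and] at hx hy
  obtain ⟨i, rfl⟩ := hx
  obtain ⟨j, rfl⟩ := hy
  simp only [Nat.unpair_pair] at hxy
  have : i = j := Fin.ext hxy
  subst this; rfl

lemma mem_Tb (b : Fin k → Fin n) (i : Fin k) : Nat.pair i (b i) ∈ Tb b :=
  Finset.mem_image_of_mem _ (Finset.mem_univ i)

def Db (b : Fin k → Fin n) : Measure (ℕ × ℕ) :=
  ((k : ℝ≥0∞))⁻¹ • ∑ i : Fin k, Measure.dirac (apt b i)

lemma Db_apply (b : Fin k → Fin n) (s : Set (ℕ × ℕ)) :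
    Db b s = (k : ℝ≥0∞)⁻¹ * ∑ i : Fin k, s.indicator 1 (apt b i) := by
  have h1 : (∑ i : Fin k, Measure.dirac (apt b i)) s
      = ∑ i : Fin k, Measure.dirac (apt b i) s := by
    rw [← Finset.sum_apply _ _ (fun i : Fin k => ⇑(Measure.dirac (apt b i))),
      ← Measure.coe_finset_sum]
  rw [Db, Measure.smul_apply, smul_eq_mul, h1]
  congr 1
  exact Finset.sum_congr rfl fun i _ => Measure.dirac_apply' _ (measurableSet_all s)

lemma isProb (hk : k ≠ 0) (b : Fin k → Fin n) : IsProbabilityMeasure (Db b) := by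
  constructor
  rw [Db_apply]
  have : ∀ i : Fin k, (Set.univ : Set (ℕ × ℕ)).indicator (1 : ℕ × ℕ → ℝ≥0∞) (apt b i) = 1 :=
    fun i => Set.indicator_of_mem (Set.mem_univ _) 1
  rw [Finset.sum_congr rfl fun i _ => this i, Finset.sum_const, Finset.card_univ,
    Fintype.card_fin, nsmul_eq_mul, mul_one]
  exact ENNReal.inv_mul_cancel (by exact_mod_cast hk) (ENNReal.natCast_ne_top k)

lemma Db_singleton (b : Fin k → Fin n) (j : Fin k) :
    Db b {apt b j} = (k : ℝ≥0∞)⁻¹ := by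
  rw [Db_apply]
  have : ∑ i : Fin k, ({apt b j} : Set (ℕ × ℕ)).indicator (1 : ℕ × ℕ → ℝ≥0∞) (apt b i) = 1 := by
    rw [Finset.sum_eq_single j]
    · exact Set.indicator_of_mem rfl 1
    · intro i _ hij
      exact Set.indicator_of_notMem (fun hmem => hij (apt_injective b hmem)) 1
    · exact fun h => absurd (Finset.mem_univ j) h
  rw [this, mul_one]

def wrongCount (f : ℕ → ℕ) (b : Fin k → Fin n) : ℕ :=
  (Finset.univ.filter fun i : Fin k => f (Nat.pair i (b i)) ≠ 0).card

lemma Db_err (b : Fin k → Fin n) (f : ℕ → ℕ) :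
    Db b {q : ℕ × ℕ | f q.1 ≠ q.2} = (k : ℝ≥0∞)⁻¹ * (wrongCount f b : ℝ≥0∞) := by
  rw [Db_apply]
  congr 1
  have h1 : ∀ i : Fin k,
      ({q : ℕ × ℕ | f q.1 ≠ q.2} : Set (ℕ × ℕ)).indicator (1 : ℕ × ℕ → ℝ≥0∞) (apt b i)
      = if f (Nat.pair i (b i)) ≠ 0 then 1 else 0 := by
    intro i
    by_cases hf : f (Nat.pair i (b i)) ≠ 0
    · rw [if_pos hf]; exact Set.indicator_of_mem hf 1
    · rw [if_neg hf]; exact Set.indicator_of_notMem hf 1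
  rw [Finset.sum_congr rfl fun i _ => h1 i, wrongCount, Finset.sum_boole]

lemma Db_realizable (hk : k ≠ 0) (b : Fin k → Fin n) :
    ∀ m : ℕ, (Measure.pi fun _ : Fin m => Db b)
      {S : Fin m → ℕ × ℕ | ∃ h ∈ Hcls, ∀ i, h (S i).1 = (S i).2} = 1 := by
  intro m
  haveI := isProb hk b
  set R : Set (ℕ × ℕ) := {q : ℕ × ℕ | hyp (Tb b) q.1 = q.2} with hR
  have hDbR : Db b R = 1 := by
    rw [Db_apply]
    have hmem : ∀ i : Fin k, R.indicator (1 : ℕ × ℕ → ℝ≥0∞) (apt b i) = 1 := by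
      intro i
      refine Set.indicator_of_mem ?_ 1
      show hyp (Tb b) (Nat.pair i (b i)) = 0
      exact hyp_eq_zero_iff.2 (mem_Tb b i)
    rw [Finset.sum_congr rfl fun i _ => hmem i, Finset.sum_const, Finset.card_univ,
      Fintype.card_fin, nsmul_eq_mul, mul_one]
    exact ENNReal.inv_mul_cancel (by exact_mod_cast hk) (ENNReal.natCast_ne_top k)
  have hsub : (Set.univ.pi fun _ : Fin m => R) ⊆
      {S : Fin m → ℕ × ℕ | ∃ h ∈ Hcls, ∀ i, h (S i).1 = (S i).2} := by
    intro S hS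
    exact ⟨hyp (Tb b), ⟨Tb b, graph_Tb b, rfl⟩, fun i => hS i (Set.mem_univ i)⟩
  have h1 : (Measure.pi fun _ : Fin m => Db b) (Set.univ.pi fun _ : Fin m => R) = 1 := by
    rw [Measure.pi_pi]
    simp [hDbR]
  refine le_antisymm prob_le_one ?_
  calc (1 : ℝ≥0∞) = _ := h1.symm
    _ ≤ _ := measure_mono hsub

lemma pi_singleton (hk : k ≠ 0) (b : Fin k → Fin n) {m : ℕ} (v : Fin m → Fin k) :
    (Measure.pi fun _ : Fin m => Db b) {fun t => apt b (v t)} = ((k : ℝ≥0∞)⁻¹) ^ m := by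
  haveI := isProb hk b
  rw [← Set.univ_pi_singleton (fun t => apt b (v t)), Measure.pi_pi]
  have : ∀ t : Fin m, Db b {apt b (v t)} = (k : ℝ≥0∞)⁻¹ := fun t => Db_singleton b (v t)
  rw [Finset.prod_congr rfl fun t _ => this t, Finset.prod_const, Finset.card_univ,
    Fintype.card_fin]

lemma lintegral_ge (hk : k ≠ 0) {m : ℕ} (A : List (ℕ × ℕ) → ℕ → ℕ) (b : Fin k → Fin n) :
    ((k : ℝ≥0∞)⁻¹) ^ (m + 1) *
        ∑ v : Fin m → Fin k,
          (wrongCount (A (List.ofFn fun t => apt b (v t))) b : ℝ≥0∞)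
      ≤ ∫⁻ S : Fin m → ℕ × ℕ, Db b {q : ℕ × ℕ | A (List.ofFn S) q.1 ≠ q.2}
          ∂(Measure.pi fun _ : Fin m => Db b) := by
  haveI := isProb hk b
  rw [lintegral_countable' (fun S : Fin m → ℕ × ℕ => Db b {q : ℕ × ℕ | A (List.ofFn S) q.1 ≠ q.2})]
  set G : (Fin m → ℕ × ℕ) → ℝ≥0∞ := fun S =>
    Db b {q : ℕ × ℕ | A (List.ofFn S) q.1 ≠ q.2} * (Measure.pi fun _ : Fin m => Db b) {S}
    with hG
  refine le_trans ?_ (ENNReal.sum_le_tsum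
    (Finset.image (fun v : Fin m → Fin k => fun t => apt b (v t)) Finset.univ) (f := G))
  rw [Finset.sum_image (by
    intro v _ w _ h
    funext t
    exact apt_injective b (congrFun h t))]
  refine le_of_eq ?_
  rw [Finset.mul_sum]
  refine Finset.sum_congr rfl fun v _ => ?_
  rw [hG]
  simp only []
  rw [pi_singleton hk b v, Db_err]
  ring

lemma realizableSeq_pairs {m : ℕ} (u w : Fin m → ℕ) (hw : ∀ s t, u s = u t → w s = w t) :
    RealizableSeq Hcls (List.ofFn fun t => (Nat.pair (u t) (w t), 0)) := by
  set T : Finset ℕ := Finset.image (fun t : Fin m => Nat.pair (u t) (w t)) Finset.univ with hT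
  have hgraph : IsGraph T := by
    intro x hx y hy hxy
    simp only [hT, Finset.mem_image, Finset.mem_univ, true_and] at hx hy
    obtain ⟨s, rfl⟩ := hx
    obtain ⟨t, rfl⟩ := hy
    simp only [Nat.unpair_pair] at hxy
    rw [hxy, hw s t hxy]
  refine ⟨hyp T, ⟨T, hgraph, rfl⟩, ?_⟩
  intro q hq
  rw [List.mem_ofFn] at hq
  obtain ⟨t, rfl⟩ := hq
  show hyp T (Nat.pair (u t) (w t)) = 0
  exact hyp_eq_zero_iff.2 (Finset.mem_image_of_mem _ (Finset.mem_univ t))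

lemma zeros_le {p : ℕ} {A : List (ℕ × ℕ) → ℕ → ℕ}
    (hA : ∀ S, RealizableSeq Hcls S → PropLe Hcls (A S) p)
    {L : List (ℕ × ℕ)} (hL : RealizableSeq Hcls L) (i : ℕ) :
    (Finset.univ.filter fun c : Fin n => A L (Nat.pair i c) = 0).card ≤ p := by
  obtain ⟨H', hsub, hcard, hcov⟩ := hA L hL
  have hex : ∀ c : Fin n, ∃ h ∈ H', A L (Nat.pair i c) = h (Nat.pair i c) :=
    fun c => hcov _
  choose F hFmem hFval using hex
  refine le_trans (Finset.card_le_card_of_injOn F (fun c _ => hFmem c) ?_) hcard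
  intro c hc c' hc' hcc
  simp only [Finset.coe_filter, Set.mem_setOf_eq, Finset.mem_univ, true_and] at hc hc'
  obtain ⟨T, hT, hFT⟩ := hsub (hFmem c)
  have h1 : Nat.pair i c ∈ T := by
    apply hyp_eq_zero_iff.1
    rw [← hFT, ← hFval c, hc]
  have h2 : Nat.pair i c' ∈ T := by
    apply hyp_eq_zero_iff.1
    rw [← hFT, hcc, ← hFval c', hc']
  have h3 := hT _ h1 _ h2 (by simp [Nat.unpair_pair])
  have h4 := congrArg (fun x => (Nat.unpair x).2) h3
  simp only [Nat.unpair_pair] at h4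
  exact Fin.ext h4

lemma sum_col {p m : ℕ} {A : List (ℕ × ℕ) → ℕ → ℕ}
    (hA : ∀ S, RealizableSeq Hcls S → PropLe Hcls (A S) p)
    (v : Fin m → Fin k) (i : Fin k) (hi : ∀ t, v t ≠ i) :
    n ^ (k - 1) * (n - p) ≤ ∑ b : Fin k → Fin n,
      (if A (List.ofFn fun t => apt b (v t)) (Nat.pair i (b i)) ≠ 0 then 1 else 0) := by
  classical
  set f : (Fin k → Fin n) → ℕ := fun b =>
    if A (List.ofFn fun t => apt b (v t)) (Nat.pair i (b i)) ≠ 0 then 1 else 0 with hf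
  set e := Equiv.funSplitAt i (Fin n) with he
  have hsum : ∑ b : Fin k → Fin n, f b
      = ∑ q : Fin n × ({j : Fin k // j ≠ i} → Fin n), f (e.symm q) :=
    (Equiv.sum_comp e.symm f).symm
  rw [hsum, Fintype.sum_prod_type, Finset.sum_comm]
  have hcard : Fintype.card ({j : Fin k // j ≠ i} → Fin n) = n ^ (k - 1) := by
    rw [Fintype.card_fun, Fintype.card_fin]
    congr 1
    have : Fintype.card {j : Fin k // j ≠ i} = Fintype.card (Fin k) - Fintype.card {j : Fin k // j = i} :=
      Fintype.card_subtype_compl _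
    rw [this, Fintype.card_fin, Fintype.card_subtype_eq]
  have inner : ∀ r : {j : Fin k // j ≠ i} → Fin n,
      n - p ≤ ∑ c : Fin n, f (e.symm (c, r)) := by
    intro r
    have hb_vt : ∀ (c : Fin n) (t : Fin m), (e.symm (c, r)) (v t) = r ⟨v t, hi t⟩ := by
      intro c t
      rw [he, Equiv.funSplitAt_symm_apply]
      exact dif_neg (hi t)
    have hb_i : ∀ c : Fin n, (e.symm (c, r)) i = c := by
      intro c
      rw [he, Equiv.funSplitAt_symm_apply]
      exact dif_pos rfl
    set L : List (ℕ × ℕ) :=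
      List.ofFn (fun t => (Nat.pair (v t) ((r ⟨v t, hi t⟩ : Fin n) : ℕ), 0)) with hL
    have hLr : ∀ c : Fin n, (List.ofFn fun t => apt (e.symm (c, r)) (v t)) = L := by
      intro c
      refine congrArg List.ofFn (funext fun t => ?_)
      simp only [apt, hb_vt c t]
    have hfval : ∀ c : Fin n, f (e.symm (c, r)) = if A L (Nat.pair i c) ≠ 0 then 1 else 0 := by
      intro c
      rw [hf]
      simp only [hLr c, hb_i c]
    have hreal : RealizableSeq Hcls L := by
      refine realizableSeq_pairs (fun t => (v t : ℕ)) (fun t => ((r ⟨v t, hi t⟩ : Fin n) : ℕ)) ?_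
      intro s t h
      have hvs : v s = v t := Fin.ext h
      have h2 : (⟨v s, hi s⟩ : {j : Fin k // j ≠ i}) = ⟨v t, hi t⟩ := Subtype.ext hvs
      show ((r ⟨v s, hi s⟩ : Fin n) : ℕ) = ((r ⟨v t, hi t⟩ : Fin n) : ℕ)
      rw [h2]
    rw [Finset.sum_congr rfl fun c _ => hfval c, Finset.sum_boole]
    have hzero := zeros_le (n := n) hA hreal (i : ℕ)
    have hsplit := Finset.card_filter_add_card_filter_not
      (s := (Finset.univ : Finset (Fin n))) (p := fun c : Fin n => A L (Nat.pair i c) = 0)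
    rw [Finset.card_univ, Fintype.card_fin] at hsplit
    have : (Finset.univ.filter fun c : Fin n => ¬ A L (Nat.pair i c) = 0).card ≥ n - p := by omega
    exact_mod_cast this
  calc n ^ (k - 1) * (n - p)
      = ∑ _r : {j : Fin k // j ≠ i} → Fin n, (n - p) := by
        rw [Finset.sum_const, Finset.card_univ, hcard, smul_eq_mul]
    _ ≤ _ := Finset.sum_le_sum fun r _ => inner r

lemma core {p m : ℕ} {A : List (ℕ × ℕ) → ℕ → ℕ}
    (hA : ∀ S, RealizableSeq Hcls S → PropLe Hcls (A S) p) :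
    k ^ m * ((k - m) * (n ^ (k - 1) * (n - p))) ≤
      ∑ b : Fin k → Fin n, ∑ v : Fin m → Fin k,
        wrongCount (A (List.ofFn fun t => apt b (v t))) b := by
  classical
  rw [Finset.sum_comm]
  have hper : ∀ v : Fin m → Fin k,
      (k - m) * (n ^ (k - 1) * (n - p)) ≤
        ∑ b : Fin k → Fin n, wrongCount (A (List.ofFn fun t => apt b (v t))) b := by
    intro v
    set V : Finset (Fin k) := Finset.image v Finset.univ with hV
    have hVc : k - m ≤ Vᶜ.card := by
      have h1 : V.card ≤ m := le_trans Finset.card_image_le (by simp)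
      have h2 : Vᶜ.card = k - V.card := by rw [Finset.card_compl, Fintype.card_fin]
      omega
    have hwc : ∀ b : Fin k → Fin n,
        (∑ i ∈ Vᶜ, if A (List.ofFn fun t => apt b (v t)) (Nat.pair i (b i)) ≠ 0 then 1 else 0)
          ≤ wrongCount (A (List.ofFn fun t => apt b (v t))) b := by
      intro b
      rw [wrongCount, Finset.card_filter]
      exact Finset.sum_le_sum_of_subset (Finset.subset_univ _)
    refine le_trans ?_ (Finset.sum_le_sum fun b _ => hwc b)
    rw [Finset.sum_comm]
    have hvi : ∀ i ∈ Vᶜ, ∀ t, v t ≠ i := by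
      intro i hiVc t ht
      exact (Finset.mem_compl.1 hiVc) (ht ▸ Finset.mem_image_of_mem v (Finset.mem_univ t))
    calc (k - m) * (n ^ (k - 1) * (n - p))
        ≤ Vᶜ.card * (n ^ (k - 1) * (n - p)) := Nat.mul_le_mul_right _ hVc
      _ = ∑ _i ∈ Vᶜ, n ^ (k - 1) * (n - p) := by rw [Finset.sum_const, smul_eq_mul]
      _ ≤ _ := Finset.sum_le_sum fun i hiv => sum_col hA v i (hvi i hiv)
  calc k ^ m * ((k - m) * (n ^ (k - 1) * (n - p)))
      = ∑ _v : Fin m → Fin k, (k - m) * (n ^ (k - 1) * (n - p)) := by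
        rw [Finset.sum_const, Finset.card_univ, Fintype.card_fun, Fintype.card_fin,
          Fintype.card_fin, smul_eq_mul]
    _ ≤ _ := Finset.sum_le_sum fun v _ => hper v

end NFPL
end

/-- There are countably infinite sets `X`, `Y` (here realized as `ℕ`) and a
hypothesis class `H ⊆ Y^X` of DS dimension exactly `1` (some single point is DS-shattered and
no pair of points is DS-shattered, hence no larger tuple) such that every learner `A` with
finite properness number w.r.t. `H` fails badly: for every sample size `m` there is an
`H`-realizable distribution `D` on which the expected error of `A` is at least `1/2`.  In
particular every learner achieving expected error below `1/2` — a fortiori every PAC learner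
for `H` — has infinite properness number. -/

theorem no_finite_properness_learner :
    ∃ H : Set (ℕ → ℕ),
      (∃ xs : Fin 1 → ℕ, DSShatters H xs) ∧
      (∀ xs : Fin 2 → ℕ, ¬ DSShatters H xs) ∧
      ∀ A : List (ℕ × ℕ) → ℕ → ℕ,
        (∃ p : ℕ, ∀ S : List (ℕ × ℕ), RealizableSeq H S → PropLe H (A S) p) →
        ∀ m : ℕ, ∃ D : Measure (ℕ × ℕ),
          IsProbabilityMeasure D ∧ RealizableDist H D ∧
          (1 : ℝ≥0∞) / 2 ≤
            ∫⁻ S : Fin m → ℕ × ℕ,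
              D {p : ℕ × ℕ | A (List.ofFn S) p.1 ≠ p.2}
              ∂(Measure.pi fun _ : Fin m => D) := by
  classical
  refine ⟨NFPL.Hcls, NFPL.shatter_one, NFPL.not_shatter_two, ?_⟩
  rintro A ⟨p, hA⟩ m
  set k := 4 * (m + 1) with hkdef
  set n := 4 * (p + 1) with hndef
  have hk : k ≠ 0 := by omega
  have main : ∃ b : Fin k → Fin n, (1 : ℝ≥0∞) / 2 ≤
      ∫⁻ S : Fin m → ℕ × ℕ, NFPL.Db b {q : ℕ × ℕ | A (List.ofFn S) q.1 ≠ q.2}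
        ∂(Measure.pi fun _ : Fin m => NFPL.Db b) := by
    by_contra hcon
    push_neg at hcon
    set X : (Fin k → Fin n) → ℝ≥0∞ := fun b =>
      ∫⁻ S : Fin m → ℕ × ℕ, NFPL.Db b {q : ℕ × ℕ | A (List.ofFn S) q.1 ≠ q.2}
        ∂(Measure.pi fun _ : Fin m => NFPL.Db b) with hX
    set C : ℕ := k ^ m * ((k - m) * (n ^ (k - 1) * (n - p))) with hC
    set K : ℕ := k ^ (m + 1) with hK
    have hub : ∑ b : Fin k → Fin n, X b ≤ ((n ^ k : ℕ) : ℝ≥0∞) * ((1 : ℝ≥0∞) / 2) := by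
      calc ∑ b : Fin k → Fin n, X b
          ≤ ∑ _b : Fin k → Fin n, (1 : ℝ≥0∞) / 2 :=
            Finset.sum_le_sum fun b _ => le_of_lt (hcon b)
        _ = ((n ^ k : ℕ) : ℝ≥0∞) * ((1 : ℝ≥0∞) / 2) := by
            rw [Finset.sum_const, Finset.card_univ, Fintype.card_fun, Fintype.card_fin,
              Fintype.card_fin, nsmul_eq_mul]
    have hlb : ((k : ℝ≥0∞)⁻¹) ^ (m + 1) * (C : ℝ≥0∞) ≤ ∑ b : Fin k → Fin n, X b := by
      have hcast : (C : ℝ≥0∞) ≤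
          ∑ b : Fin k → Fin n, ∑ v : Fin m → Fin k,
            (NFPL.wrongCount (A (List.ofFn fun t => NFPL.apt b (v t))) b : ℝ≥0∞) := by
        exact_mod_cast NFPL.core (k := k) (n := n) (p := p) (m := m) hA
      calc ((k : ℝ≥0∞)⁻¹) ^ (m + 1) * (C : ℝ≥0∞)
          ≤ ((k : ℝ≥0∞)⁻¹) ^ (m + 1) * ∑ b : Fin k → Fin n, ∑ v : Fin m → Fin k,
              (NFPL.wrongCount (A (List.ofFn fun t => NFPL.apt b (v t))) b : ℝ≥0∞) :=
            mul_le_mul_right hcast _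
        _ = ∑ b : Fin k → Fin n, ((k : ℝ≥0∞)⁻¹) ^ (m + 1) *
              ∑ v : Fin m → Fin k,
                (NFPL.wrongCount (A (List.ofFn fun t => NFPL.apt b (v t))) b : ℝ≥0∞) := by
            rw [Finset.mul_sum]
        _ ≤ ∑ b : Fin k → Fin n, X b :=
            Finset.sum_le_sum fun b _ => NFPL.lintegral_ge hk A b
    have hKne : ((K : ℕ) : ℝ≥0∞) ≠ 0 := by
      rw [Nat.cast_ne_zero]
      positivity
    have hKtop : ((K : ℕ) : ℝ≥0∞) ≠ ⊤ := ENNReal.natCast_ne_top K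
    have hnat : n ^ k * K < C * 2 := by
      have hk1 : 1 ≤ k := by omega
      have e1 : n ^ k = n ^ (k - 1) * n := by
        conv_lhs => rw [show k = k - 1 + 1 by omega]
        rw [pow_succ]
      have e2 : K = k ^ m * k := by rw [hK, pow_succ]
      have hkm : k - m = 3 * m + 4 := by omega
      have hnp : n - p = 3 * p + 4 := by omega
      have hpos : 0 < k ^ m * n ^ (k - 1) := by positivity
      have hsmall : n * k < (k - m) * (n - p) * 2 := by
        rw [hkm, hnp, hkdef, hndef]
        nlinarith [Nat.zero_le (m * p)]
      calc n ^ k * K = (k ^ m * n ^ (k - 1)) * (n * k) := by rw [e1, e2]; ring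
        _ < (k ^ m * n ^ (k - 1)) * ((k - m) * (n - p) * 2) :=
            mul_lt_mul_of_pos_left hsmall hpos
        _ = C * 2 := by rw [hC]; ring
    have hnum : ((n ^ k : ℕ) : ℝ≥0∞) * ((1 : ℝ≥0∞) / 2) <
        ((k : ℝ≥0∞)⁻¹) ^ (m + 1) * (C : ℝ≥0∞) := by
      have hinv : ((k : ℝ≥0∞)⁻¹) ^ (m + 1) = (((K : ℕ) : ℝ≥0∞))⁻¹ := by
        rw [hK, Nat.cast_pow, ENNReal.inv_pow]
      rw [hinv, mul_comm (((K : ℕ) : ℝ≥0∞))⁻¹ _, ← div_eq_mul_inv, mul_one_div]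
      rw [ENNReal.lt_div_iff_mul_lt (Or.inl hKne) (Or.inl hKtop)]
      rw [div_eq_mul_inv, mul_right_comm, ← div_eq_mul_inv]
      rw [ENNReal.div_lt_iff (Or.inl two_ne_zero) (Or.inl ENNReal.ofNat_ne_top)]
      have : ((n ^ k : ℕ) : ℝ≥0∞) * ((K : ℕ) : ℝ≥0∞) = ((n ^ k * K : ℕ) : ℝ≥0∞) := by
        push_cast; ring
      rw [this]
      have h2 : ((C : ℕ) : ℝ≥0∞) * 2 = ((C * 2 : ℕ) : ℝ≥0∞) := by push_cast; ring
      rw [h2]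
      exact_mod_cast hnat
    exact absurd (le_trans hlb hub) (not_le.2 hnum)
  obtain ⟨b, hb⟩ := main
  haveI := NFPL.isProb hk b
  exact ⟨NFPL.Db b, inferInstance, NFPL.Db_realizable hk b, hb⟩
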